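/- Let W_n be the group of signed permutations of {±1,...,±n}, i.e., bijections w of [±n] with w(-i) = -w(i). If w ∈ W_n has w(i) > w(i+1) > w(i+2) for some i ∈ [n-2], then w⁻¹ is not an atom of any involution in W_n. -/

import Mathlib

/-- The hyperoctahedral group `W_n`: bijections `w` of `ℤ` with `w (-i) = -(w i)` for
all `i`, fixing every `i` with `|i| > n`.  This is the group of signed permutations of
`[±n] = {-n, …, -1, 1, …, n}`. -/
def WB (n : ℕ) : Subgroup (Equiv.Perm ℤ) where
  carrier := {w | (∀ i : ℤ, w (-i) = -(w i)) ∧ ∀ i : ℤ, (n : ℤ) < |i| → w i = i}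
  one_mem' := by
    constructor <;> intro i <;> simp
  mul_mem' := by
    rintro u v ⟨hu1, hu2⟩ ⟨hv1, hv2⟩
    constructor
    · intro i
      simp only [Equiv.Perm.mul_apply, hv1, hu1]
    · intro i hi
      simp only [Equiv.Perm.mul_apply, hv2 i hi, hu2 i hi]
  inv_mem' := by
    rintro w ⟨h1, h2⟩
    constructor
    · intro i
      apply w.injective
      rw [Equiv.Perm.coe_inv, Equiv.apply_symm_apply, h1, Equiv.apply_symm_apply]
    · intro i hi
      apply w.injective
      rw [Equiv.Perm.coe_inv, Equiv.apply_symm_apply, h2 i hi]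

/-- The standard Coxeter generators of `W_n`: `tB 0 = (-1, 1)` and
`tB i = (i, i+1)(-i, -i-1)` for `i ≥ 1`. -/
def tB : ℕ → Equiv.Perm ℤ
  | 0 => Equiv.swap (-1) 1
  | (k + 1) => Equiv.swap ((k : ℤ) + 1) ((k : ℤ) + 2) *
      Equiv.swap (-((k : ℤ) + 1)) (-((k : ℤ) + 2))

/-- The Coxeter length of an element of `W_n`: the least length of a word in the
generators `tB 0, …, tB (n-1)` whose product is the given element. -/
noncomputable def lenB (n : ℕ) (w : WB n) : ℕ :=
  sInf {l | ∃ word : List (Fin n), word.length = l ∧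
    (word.map (fun i => tB i)).prod = (w : Equiv.Perm ℤ)}

/-- The set of atoms of `z`: the minimal length elements `w` with `w⁻¹ ∘ w = z`. -/
def AtomsB (n : ℕ) (o : WB n → WB n → WB n) (z : WB n) : Set (WB n) :=
  {w | o w⁻¹ w = z ∧ ∀ v : WB n, o v⁻¹ v = z → lenB n w ≤ lenB n v}

lemma tB_zero_apply (x : ℤ) : tB 0 x = if x = -1 then 1 else if x = 1 then -1 else x := by
  simp [tB, Equiv.swap_apply_def]

lemma tB_pos_apply (j : ℕ) (hj : 1 ≤ j) (x : ℤ) :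
    tB j x = if x = (j:ℤ) then (j:ℤ)+1 else if x = (j:ℤ)+1 then (j:ℤ)
      else if x = -(j:ℤ) then -(j:ℤ)-1 else if x = -(j:ℤ)-1 then -(j:ℤ) else x := by
  obtain ⟨k, rfl⟩ : ∃ k, j = k + 1 := ⟨j - 1, by omega⟩
  simp only [tB, Equiv.Perm.mul_apply, Equiv.swap_apply_def]
  push_cast
  split_ifs <;> omega

lemma tB_sq (j : ℕ) : tB j * tB j = 1 := by
  rcases Nat.eq_zero_or_pos j with rfl | hj
  · simp [tB]
  · ext x
    simp only [Equiv.Perm.mul_apply, Equiv.Perm.one_apply, tB_pos_apply j hj]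
    split_ifs <;> omega

lemma mem_WB {n : ℕ} {w : Equiv.Perm ℤ} :
    w ∈ WB n ↔ (∀ i : ℤ, w (-i) = -(w i)) ∧ ∀ i : ℤ, (n : ℤ) < |i| → w i = i := Iff.rfl

lemma tB_mem {n j : ℕ} (h : j < n) : tB j ∈ WB n := by
  have hn : (j : ℤ) < (n : ℤ) := by exact_mod_cast h
  rcases Nat.eq_zero_or_pos j with rfl | hj
  · constructor
    · intro x; rw [tB_zero_apply, tB_zero_apply]; split_ifs <;> omega
    · intro x hx
      rcases abs_cases x with ⟨h1, h2⟩ | ⟨h1, h2⟩ <;>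
        (rw [tB_zero_apply]; split_ifs <;> omega)
  · constructor
    · intro x
      rw [tB_pos_apply j hj, tB_pos_apply j hj]
      split_ifs <;> omega
    · intro x hx
      rcases abs_cases x with ⟨h1, h2⟩ | ⟨h1, h2⟩ <;>
        (rw [tB_pos_apply j hj]; split_ifs <;> omega)

/-- The type-B inversion statistic. -/
noncomputable def invB (n : ℕ) (v : Equiv.Perm ℤ) : ℕ :=
  ∑ p ∈ Finset.Icc (1:ℤ) (n:ℤ) ×ˢ Finset.Icc (1:ℤ) (n:ℤ),
    ((if p.1 < p.2 ∧ v p.2 < v p.1 then 1 else 0) +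
     (if p.1 ≤ p.2 ∧ v p.1 + v p.2 < 0 then 1 else 0))

lemma invB_one (n : ℕ) : invB n 1 = 0 := by
  refine Finset.sum_eq_zero fun p hp => ?_
  simp only [Finset.mem_product, Finset.mem_Icc] at hp
  rw [if_neg (show ¬(p.1 < p.2 ∧ (1 : Equiv.Perm ℤ) p.2 < (1 : Equiv.Perm ℤ) p.1) by
    simp only [Equiv.Perm.one_apply]; omega),
    if_neg (show ¬(p.1 ≤ p.2 ∧ (1 : Equiv.Perm ℤ) p.1 + (1 : Equiv.Perm ℤ) p.2 < 0) by
    simp only [Equiv.Perm.one_apply]; omega), add_zero]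

lemma tB_apply_apply (j : ℕ) (x : ℤ) : tB j (tB j x) = x := by
  have h : (tB j * tB j) x = (1 : Equiv.Perm ℤ) x := by rw [tB_sq]
  simpa using h

set_option maxHeartbeats 1000000 in
lemma invB_step_pos (n : ℕ) (u : Equiv.Perm ℤ) (j : ℕ) (hj : 1 ≤ j) (hjn : j + 1 ≤ n) :
    (u ((j:ℤ)+1) < u (j:ℤ) → invB n u = invB n (u * tB j) + 1) ∧
    (u (j:ℤ) < u ((j:ℤ)+1) → invB n (u * tB j) = invB n u + 1) := by
  have hjn' : (j : ℤ) + 1 ≤ (n : ℤ) := by exact_mod_cast hjn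
  have hj' : (1 : ℤ) ≤ (j : ℤ) := by exact_mod_cast hj
  have hmaps : ∀ x : ℤ, x ∈ Finset.Icc (1:ℤ) (n:ℤ) → tB j x ∈ Finset.Icc (1:ℤ) (n:ℤ) := by
    intro x hx
    simp only [Finset.mem_Icc] at hx ⊢
    rw [tB_pos_apply j hj]
    split_ifs <;> omega
  have hre : invB n (u * tB j) = ∑ p ∈ Finset.Icc (1:ℤ) (n:ℤ) ×ˢ Finset.Icc (1:ℤ) (n:ℤ),
      ((if tB j p.1 < tB j p.2 ∧ u p.2 < u p.1 then 1 else 0) +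
       (if tB j p.1 ≤ tB j p.2 ∧ u p.1 + u p.2 < 0 then 1 else 0)) := by
    rw [invB]
    refine Finset.sum_equiv (Equiv.prodCongr (tB j) (tB j)) ?_ ?_
    · intro p
      simp only [Finset.mem_product, Equiv.prodCongr_apply, Prod.map_fst, Prod.map_snd]
      constructor
      · rintro ⟨h1, h2⟩; exact ⟨hmaps _ h1, hmaps _ h2⟩
      · rintro ⟨h1, h2⟩
        have g1 := hmaps _ h1
        have g2 := hmaps _ h2
        rw [tB_apply_apply] at g1 g2
        exact ⟨g1, g2⟩
    · intro p _
      simp only [Equiv.prodCongr_apply, Prod.map_fst, Prod.map_snd, Equiv.Perm.mul_apply,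
        tB_apply_apply]
      rfl
  have hq1 : ((j:ℤ), (j:ℤ)+1) ∈ Finset.Icc (1:ℤ) (n:ℤ) ×ˢ Finset.Icc (1:ℤ) (n:ℤ) := by
    simp only [Finset.mem_product, Finset.mem_Icc]
    omega
  have hq2 : ((j:ℤ)+1, (j:ℤ)) ∈
      (Finset.Icc (1:ℤ) (n:ℤ) ×ˢ Finset.Icc (1:ℤ) (n:ℤ)).erase ((j:ℤ), (j:ℤ)+1) := by
    refine Finset.mem_erase.2 ⟨?_, ?_⟩
    · simp only [ne_eq, Prod.mk.injEq]; omega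
    · simp only [Finset.mem_product, Finset.mem_Icc]; omega
  have split1 : ∀ (f : ℤ × ℤ → ℕ),
      ∑ p ∈ Finset.Icc (1:ℤ) (n:ℤ) ×ˢ Finset.Icc (1:ℤ) (n:ℤ), f p
      = f ((j:ℤ), (j:ℤ)+1) + (f ((j:ℤ)+1, (j:ℤ)) +
        ∑ p ∈ ((Finset.Icc (1:ℤ) (n:ℤ) ×ˢ Finset.Icc (1:ℤ) (n:ℤ)).erase
          ((j:ℤ), (j:ℤ)+1)).erase ((j:ℤ)+1, (j:ℤ)), f p) := by
    intro f
    rw [Finset.add_sum_erase _ f hq2, Finset.add_sum_erase _ f hq1]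
  have hσ1 : tB j (j:ℤ) = (j:ℤ)+1 := by
    rw [tB_pos_apply j hj]; split_ifs <;> omega
  have hσ2 : tB j ((j:ℤ)+1) = (j:ℤ) := by
    rw [tB_pos_apply j hj]; split_ifs <;> omega
  have hrest : ∀ p ∈ ((Finset.Icc (1:ℤ) (n:ℤ) ×ˢ Finset.Icc (1:ℤ) (n:ℤ)).erase
          ((j:ℤ), (j:ℤ)+1)).erase ((j:ℤ)+1, (j:ℤ)),
      ((if tB j p.1 < tB j p.2 ∧ u p.2 < u p.1 then 1 else 0) +
       (if tB j p.1 ≤ tB j p.2 ∧ u p.1 + u p.2 < 0 then 1 else 0))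
      = ((if p.1 < p.2 ∧ u p.2 < u p.1 then 1 else 0) +
       (if p.1 ≤ p.2 ∧ u p.1 + u p.2 < 0 then 1 else 0)) := by
    intro p hp
    simp only [Finset.mem_erase, Finset.mem_product, Finset.mem_Icc, ne_eq,
      Prod.ext_iff] at hp
    obtain ⟨hne2, hne1, hp1, hp2⟩ := hp
    have ho1 : tB j p.1 < tB j p.2 ↔ p.1 < p.2 := by
      rw [tB_pos_apply j hj, tB_pos_apply j hj]
      split_ifs <;> omega
    have ho2 : tB j p.1 ≤ tB j p.2 ↔ p.1 ≤ p.2 := by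
      rw [tB_pos_apply j hj, tB_pos_apply j hj]
      split_ifs <;> omega
    simp only [ho1, ho2]
  have ev : invB n (u * tB j) =
      ((if (j:ℤ)+1 < (j:ℤ) ∧ u ((j:ℤ)+1) < u (j:ℤ) then 1 else 0) +
       (if (j:ℤ)+1 ≤ (j:ℤ) ∧ u (j:ℤ) + u ((j:ℤ)+1) < 0 then 1 else 0)) +
      (((if (j:ℤ) < (j:ℤ)+1 ∧ u (j:ℤ) < u ((j:ℤ)+1) then 1 else 0) +
       (if (j:ℤ) ≤ (j:ℤ)+1 ∧ u ((j:ℤ)+1) + u (j:ℤ) < 0 then 1 else 0)) +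
       ∑ p ∈ ((Finset.Icc (1:ℤ) (n:ℤ) ×ˢ Finset.Icc (1:ℤ) (n:ℤ)).erase
          ((j:ℤ), (j:ℤ)+1)).erase ((j:ℤ)+1, (j:ℤ)),
        ((if p.1 < p.2 ∧ u p.2 < u p.1 then 1 else 0) +
         (if p.1 ≤ p.2 ∧ u p.1 + u p.2 < 0 then 1 else 0))) := by
    rw [hre, split1]
    simp only [hσ1, hσ2]
    congr 2
    exact Finset.sum_congr rfl hrest
  have eu : invB n u =
      ((if (j:ℤ) < (j:ℤ)+1 ∧ u ((j:ℤ)+1) < u (j:ℤ) then 1 else 0) +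
       (if (j:ℤ) ≤ (j:ℤ)+1 ∧ u (j:ℤ) + u ((j:ℤ)+1) < 0 then 1 else 0)) +
      (((if (j:ℤ)+1 < (j:ℤ) ∧ u (j:ℤ) < u ((j:ℤ)+1) then 1 else 0) +
       (if (j:ℤ)+1 ≤ (j:ℤ) ∧ u ((j:ℤ)+1) + u (j:ℤ) < 0 then 1 else 0)) +
       ∑ p ∈ ((Finset.Icc (1:ℤ) (n:ℤ) ×ˢ Finset.Icc (1:ℤ) (n:ℤ)).erase
          ((j:ℤ), (j:ℤ)+1)).erase ((j:ℤ)+1, (j:ℤ)),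
        ((if p.1 < p.2 ∧ u p.2 < u p.1 then 1 else 0) +
         (if p.1 ≤ p.2 ∧ u p.1 + u p.2 < 0 then 1 else 0))) := by
    rw [invB]
    exact split1 _
  generalize hR : ∑ p ∈ ((Finset.Icc (1:ℤ) (n:ℤ) ×ˢ Finset.Icc (1:ℤ) (n:ℤ)).erase
          ((j:ℤ), (j:ℤ)+1)).erase ((j:ℤ)+1, (j:ℤ)),
        ((if p.1 < p.2 ∧ u p.2 < u p.1 then 1 else 0) +
         (if p.1 ≤ p.2 ∧ u p.1 + u p.2 < 0 then 1 else 0)) = R at ev eu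
  clear hre split1 hrest hmaps hq1 hq2 hσ1 hσ2
  constructor
  · intro hlt
    rw [ev, eu]
    split_ifs <;> omega
  · intro hlt
    rw [ev, eu]
    split_ifs <;> omega

lemma WB_apply_zero {n : ℕ} {u : Equiv.Perm ℤ} (hu : u ∈ WB n) : u 0 = 0 := by
  have h := hu.1 0
  simp only [neg_zero] at h
  omega

lemma WB_apply_ne_zero {n : ℕ} {u : Equiv.Perm ℤ} (hu : u ∈ WB n) {x : ℤ} (hx : x ≠ 0) :
    u x ≠ 0 := by
  intro h
  have h0 : u x = u 0 := by rw [h, WB_apply_zero hu]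
  exact hx (u.injective h0)

set_option maxHeartbeats 1000000 in
lemma invB_step_zero (n : ℕ) (hn : 0 < n) (u : Equiv.Perm ℤ) (hu : u ∈ WB n) :
    (u 1 < 0 → invB n u = invB n (u * tB 0) + 1) ∧
    (0 < u 1 → invB n (u * tB 0) = invB n u + 1) := by
  have hn' : (1 : ℤ) ≤ (n : ℤ) := by exact_mod_cast hn
  have hu1 : u (-1) = -(u 1) := hu.1 1
  have hval : ∀ x : ℤ, 1 ≤ x → (u * tB 0) x = if x = 1 then -(u 1) else u x := by
    intro x hx
    rw [Equiv.Perm.mul_apply, tB_zero_apply, if_neg (by omega : ¬ x = -1)]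
    rcases eq_or_ne x 1 with rfl | hne
    · simp [hu1]
    · rw [if_neg hne, if_neg hne]
  have hq1 : ((1:ℤ), (1:ℤ)) ∈ Finset.Icc (1:ℤ) (n:ℤ) ×ˢ Finset.Icc (1:ℤ) (n:ℤ) := by
    simp only [Finset.mem_product, Finset.mem_Icc]
    omega
  have split1 : ∀ (f : ℤ × ℤ → ℕ),
      ∑ p ∈ Finset.Icc (1:ℤ) (n:ℤ) ×ˢ Finset.Icc (1:ℤ) (n:ℤ), f p
      = f ((1:ℤ), (1:ℤ)) +
        ∑ p ∈ (Finset.Icc (1:ℤ) (n:ℤ) ×ˢ Finset.Icc (1:ℤ) (n:ℤ)).erase ((1:ℤ), (1:ℤ)), f p := by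
    intro f
    rw [Finset.add_sum_erase _ f hq1]
  have hrest : ∀ p ∈ (Finset.Icc (1:ℤ) (n:ℤ) ×ˢ Finset.Icc (1:ℤ) (n:ℤ)).erase ((1:ℤ), (1:ℤ)),
      ((if p.1 < p.2 ∧ (u * tB 0) p.2 < (u * tB 0) p.1 then 1 else 0) +
       (if p.1 ≤ p.2 ∧ (u * tB 0) p.1 + (u * tB 0) p.2 < 0 then 1 else 0))
      = ((if p.1 < p.2 ∧ u p.2 < u p.1 then 1 else 0) +
       (if p.1 ≤ p.2 ∧ u p.1 + u p.2 < 0 then 1 else 0)) := by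
    intro p hp
    simp only [Finset.mem_erase, Finset.mem_product, Finset.mem_Icc, ne_eq,
      Prod.ext_iff] at hp
    obtain ⟨hne, hp1, hp2⟩ := hp
    rw [hval p.1 hp1.1, hval p.2 hp2.1]
    by_cases hc1 : p.1 = 1 <;> by_cases hc2 : p.2 = 1
    · exact absurd ⟨hc1, hc2⟩ hne
    · rw [if_pos hc1, if_neg hc2]
      have h2 : 1 < p.2 := by omega
      rw [hc1]
      split_ifs <;> omega
    · rw [if_neg hc1, if_pos hc2]
      have h1 : 1 < p.1 := by omega
      rw [hc2]
      split_ifs <;> omega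
    · rw [if_neg hc1, if_neg hc2]
  have ev : invB n (u * tB 0) =
      ((if (1:ℤ) < 1 ∧ -(u 1) < -(u 1) then 1 else 0) +
       (if (1:ℤ) ≤ 1 ∧ -(u 1) + -(u 1) < 0 then 1 else 0)) +
      ∑ p ∈ (Finset.Icc (1:ℤ) (n:ℤ) ×ˢ Finset.Icc (1:ℤ) (n:ℤ)).erase ((1:ℤ), (1:ℤ)),
        ((if p.1 < p.2 ∧ u p.2 < u p.1 then 1 else 0) +
         (if p.1 ≤ p.2 ∧ u p.1 + u p.2 < 0 then 1 else 0)) := by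
    rw [invB, split1]
    rw [show (u * tB 0) ((1:ℤ),(1:ℤ)).1 = -(u 1) from by rw [hval 1 le_rfl]; simp]
    congr 1
    exact Finset.sum_congr rfl hrest
  have eu : invB n u =
      ((if (1:ℤ) < 1 ∧ u 1 < u 1 then 1 else 0) +
       (if (1:ℤ) ≤ 1 ∧ u 1 + u 1 < 0 then 1 else 0)) +
      ∑ p ∈ (Finset.Icc (1:ℤ) (n:ℤ) ×ˢ Finset.Icc (1:ℤ) (n:ℤ)).erase ((1:ℤ), (1:ℤ)),
        ((if p.1 < p.2 ∧ u p.2 < u p.1 then 1 else 0) +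
         (if p.1 ≤ p.2 ∧ u p.1 + u p.2 < 0 then 1 else 0)) := by
    rw [invB]
    exact split1 _
  generalize hR : ∑ p ∈ (Finset.Icc (1:ℤ) (n:ℤ) ×ˢ Finset.Icc (1:ℤ) (n:ℤ)).erase ((1:ℤ), (1:ℤ)),
        ((if p.1 < p.2 ∧ u p.2 < u p.1 then 1 else 0) +
         (if p.1 ≤ p.2 ∧ u p.1 + u p.2 < 0 then 1 else 0)) = R at ev eu
  clear split1 hrest hval hq1
  constructor
  · intro hlt
    rw [ev, eu]
    split_ifs <;> omega
  · intro hlt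
    rw [ev, eu]
    split_ifs <;> omega

lemma invB_eq_zero (n : ℕ) (u : Equiv.Perm ℤ) (hu : u ∈ WB n) (h : invB n u = 0) : u = 1 := by
  have hterm := (Finset.sum_eq_zero_iff).1 h
  have key : ∀ x y : ℤ, 1 ≤ x → x ≤ n → 1 ≤ y → y ≤ n →
      (x < y → u x ≤ u y) ∧ (x ≤ y → 0 ≤ u x + u y) := by
    intro x y hx1 hx2 hy1 hy2
    have hp : ((x, y) : ℤ × ℤ) ∈ Finset.Icc (1:ℤ) (n:ℤ) ×ˢ Finset.Icc (1:ℤ) (n:ℤ) := by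
      simp only [Finset.mem_product, Finset.mem_Icc]; omega
    have := hterm _ hp
    simp only at this
    constructor <;> intro hxy <;> (by_contra hcon; push_neg at hcon; split_ifs at this <;> omega)
  have hpos : ∀ x : ℤ, 1 ≤ x → x ≤ n → 0 < u x := by
    intro x hx1 hx2
    have h2 := (key x x hx1 hx2 hx1 hx2).2 le_rfl
    have h3 := WB_apply_ne_zero hu (show x ≠ 0 by omega)
    omega
  have hub : ∀ x : ℤ, 1 ≤ x → x ≤ n → u x ≤ n := by
    intro x hx1 hx2
    by_contra hcon
    push_neg at hcon
    have h1 : u (u x) = u x := hu.2 (u x) (by rw [abs_of_pos (by omega)]; omega)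
    have h2 := u.injective h1
    omega
  have hstrict : ∀ x y : ℤ, 1 ≤ x → x < y → y ≤ n → u x < u y := by
    intro x y hx1 hxy hy2
    have h1 := (key x y hx1 (by omega) (by omega) hy2).1 hxy
    have h2 : u x ≠ u y := fun hc => by have := u.injective hc; omega
    omega
  have Hlow : ∀ d : ℕ, 1 + (d:ℤ) ≤ (n:ℤ) → 1 + (d:ℤ) ≤ u (1 + (d:ℤ)) := by
    intro d
    induction d with
    | zero => intro hd; have := hpos 1 le_rfl (by exact_mod_cast hd); simp only [Nat.cast_zero, add_zero]; omega
    | succ d ih =>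
      intro hd
      push_cast at hd ⊢
      have h1 : 1 + (d:ℤ) ≤ u (1 + (d:ℤ)) := by
        have := ih (by omega); push_cast at this; omega
      have h2 : u (1 + (d:ℤ)) < u (1 + (d:ℤ) + 1) := hstrict _ _ (by omega) (by omega) (by omega)
      have : (1:ℤ) + (d:ℤ) + 1 = 1 + ((d:ℤ) + 1) := by ring
      rw [← this]
      omega
  have Hhigh : ∀ d : ℕ, (d:ℤ) < (n:ℤ) → u ((n:ℤ) - (d:ℤ)) ≤ (n:ℤ) - (d:ℤ) := by
    intro d
    induction d with
    | zero => intro hd; simpa using hub n (by exact_mod_cast hd) le_rfl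
    | succ d ih =>
      intro hd
      push_cast at hd ⊢
      have h1 : u ((n:ℤ) - (d:ℤ)) ≤ (n:ℤ) - (d:ℤ) := by
        have := ih (by omega); omega
      have h2 : u ((n:ℤ) - (d:ℤ) - 1) < u ((n:ℤ) - (d:ℤ)) :=
        hstrict _ _ (by omega) (by omega) (by omega)
      have : (n:ℤ) - ((d:ℤ) + 1) = (n:ℤ) - (d:ℤ) - 1 := by ring
      rw [this]
      omega
  have hfix : ∀ x : ℤ, 1 ≤ x → x ≤ n → u x = x := by
    intro x hx1 hx2
    have e1 : 1 + (((x - 1).toNat : ℤ)) = x := by omega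
    have e2 : (n:ℤ) - (((n - x).toNat : ℤ)) = x := by omega
    have l1 := Hlow (x - 1).toNat (by omega)
    have l2 := Hhigh (n - x).toNat (by omega)
    rw [e1] at l1
    rw [e2] at l2
    omega
  ext x
  simp only [Equiv.Perm.one_apply]
  rcases lt_trichotomy x 0 with hx | rfl | hx
  · have h1 : u (-(-x)) = -(u (-x)) := hu.1 (-x)
    simp only [neg_neg] at h1
    rcases le_or_gt (-x) (n:ℤ) with hc | hc
    · have := hfix (-x) (by omega) hc
      omega
    · have := hu.2 (-x) (by rw [abs_of_pos (by omega)]; omega)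
      omega
  · exact WB_apply_zero hu
  · rcases le_or_gt x (n:ℤ) with hc | hc
    · exact hfix x (by omega) hc
    · exact hu.2 x (by rw [abs_of_pos (by omega)]; omega)

lemma invB_pos_desc (n : ℕ) (u : Equiv.Perm ℤ) (hu : u ∈ WB n) (h : invB n u ≠ 0) :
    ∃ j : ℕ, j < n ∧ ((j = 0 ∧ u 1 < 0) ∨ (1 ≤ j ∧ u ((j:ℤ)+1) < u (j:ℤ))) := by
  by_contra hc
  push_neg at hc
  apply h
  rcases Nat.eq_zero_or_pos n with rfl | hn
  · rw [invB]
    have : Finset.Icc (1:ℤ) ((0:ℕ):ℤ) = ∅ := by decide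
    rw [this]
    simp
  · have h1 : 0 < u 1 := by
      have hc0 := hc 0 hn
      have h2 := WB_apply_ne_zero hu (show (1:ℤ) ≠ 0 by omega)
      omega
    have hadjZ : ∀ x : ℤ, 1 ≤ x → x + 1 ≤ n → u x < u (x + 1) := by
      intro x hx1 hx2
      have hj : x.toNat < n := by omega
      have hcj := hc x.toNat hj
      have hxx : ((x.toNat : ℕ) : ℤ) = x := by omega
      rw [hxx] at hcj
      have hne : u x ≠ u (x + 1) := fun hcon => by have := u.injective hcon; omega
      omega
    have hmono : ∀ x y : ℤ, 1 ≤ x → x < y → y ≤ n → u x < u y := by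
      have hch : ∀ d : ℕ, ∀ x : ℤ, 1 ≤ x → x + (d:ℤ) + 1 ≤ n → u x < u (x + (d:ℤ) + 1) := by
        intro d
        induction d with
        | zero => intro x hx1 hx2; simpa using hadjZ x hx1 (by omega)
        | succ d ih =>
          intro x hx1 hx2
          push_cast at hx2 ⊢
          have h1 : u x < u (x + (d:ℤ) + 1) := ih x hx1 (by omega)
          have h2 : u (x + (d:ℤ) + 1) < u (x + (d:ℤ) + 1 + 1) := hadjZ _ (by omega) (by omega)
          have e : x + ((d:ℤ) + 1) + 1 = x + (d:ℤ) + 1 + 1 := by ring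
          rw [e]
          omega
      intro x y hx1 hxy hy2
      have e : x + (((y - x - 1).toNat : ℤ)) + 1 = y := by omega
      have := hch (y - x - 1).toNat x hx1 (by omega)
      rwa [e] at this
    have hpos : ∀ x : ℤ, 1 ≤ x → x ≤ n → 0 < u x := by
      intro x hx1 hx2
      rcases eq_or_lt_of_le hx1 with rfl | hgt
      · exact h1
      · have := hmono 1 x le_rfl hgt hx2
        omega
    refine Finset.sum_eq_zero fun p hp => ?_
    simp only [Finset.mem_product, Finset.mem_Icc] at hp
    have hp1 := hpos p.1 hp.1.1 hp.1.2
    have hp2 := hpos p.2 hp.2.1 hp.2.2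
    have himp : p.1 < p.2 → u p.1 < u p.2 := fun hlt => hmono p.1 p.2 hp.1.1 hlt hp.2.2
    split_ifs <;> omega

lemma invB_step_le (n : ℕ) (u : Equiv.Perm ℤ) (hu : u ∈ WB n) (j : ℕ) (hj : j < n) :
    invB n (u * tB j) ≤ invB n u + 1 := by
  rcases Nat.eq_zero_or_pos j with rfl | hj1
  · rcases lt_trichotomy (u 1) 0 with h | h | h
    · have := (invB_step_zero n (by omega) u hu).1 h; omega
    · exact absurd h (WB_apply_ne_zero hu one_ne_zero)
    · have := (invB_step_zero n (by omega) u hu).2 h; omega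
  · rcases lt_trichotomy (u ((j:ℤ)+1)) (u (j:ℤ)) with h | h | h
    · have := (invB_step_pos n u j hj1 (by omega)).1 h; omega
    · exfalso; have := u.injective h; omega
    · have := (invB_step_pos n u j hj1 (by omega)).2 h; omega


lemma exists_word (n : ℕ) : ∀ m : ℕ, ∀ u : Equiv.Perm ℤ, u ∈ WB n → invB n u = m →
    ∃ l : List ℕ, (∀ j ∈ l, j < n) ∧ (l.map tB).prod = u ∧ l.length = m := by
  intro m
  induction m using Nat.strong_induction_on with
  | _ m ih =>
    intro u hu hm
    rcases Nat.eq_zero_or_pos m with rfl | hmpos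
    · have h1 : u = 1 := invB_eq_zero n u hu hm
      exact ⟨[], by simp, by simp [h1], rfl⟩
    · obtain ⟨j, hj, hcase⟩ := invB_pos_desc n u hu (by omega)
      have hmem : tB j ∈ WB n := tB_mem hj
      have hu' : u * tB j ∈ WB n := mul_mem hu hmem
      have hstep : invB n u = invB n (u * tB j) + 1 := by
        rcases hcase with ⟨rfl, hneg⟩ | ⟨hj1, hdesc⟩
        · exact (invB_step_zero n (by omega) u hu).1 hneg
        · exact (invB_step_pos n u j hj1 (by omega)).1 hdesc
      obtain ⟨l, hbd, hl, hlen⟩ := ih (m - 1) (by omega) (u * tB j) hu' (by omega)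
      refine ⟨l ++ [j], ?_, ?_, by simp [hlen]; omega⟩
      · intro x hx
        rcases List.mem_append.1 hx with h | h
        · exact hbd x h
        · simp only [List.mem_singleton] at h; omega
      · rw [List.map_append, List.prod_append]
        simp only [List.map_cons, List.map_nil, List.prod_cons, List.prod_nil, mul_one, hl]
        rw [mul_assoc, tB_sq, mul_one]

lemma invB_word_le (n : ℕ) (l : List ℕ) (hl : ∀ j ∈ l, j < n) :
    ((l.map tB).prod ∈ WB n) ∧ invB n ((l.map tB).prod) ≤ l.length := by
  induction l using List.reverseRecOn with
  | nil => exact ⟨one_mem _, by simp [invB_one]⟩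
  | append_singleton l j ih =>
    have hl' : ∀ x ∈ l, x < n := fun x hx => hl x (List.mem_append.2 (Or.inl hx))
    have hj : j < n := hl j (List.mem_append.2 (Or.inr (by simp)))
    obtain ⟨hmem, hle⟩ := ih hl'
    rw [List.map_append, List.prod_append]
    simp only [List.map_cons, List.map_nil, List.prod_cons, List.prod_nil, mul_one]
    refine ⟨mul_mem hmem (tB_mem hj), ?_⟩
    have := invB_step_le n _ hmem j hj
    simp only [List.length_append, List.length_singleton]
    omega

lemma word_prod_conv (n : ℕ) (word : List (Fin n)) :
    (word.map (fun i => tB i)).prod = ((word.map Fin.val).map tB).prod := by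
  induction word with
  | nil => rfl
  | cons a l ih => simp_all [List.flatMap_cons]

lemma lenB_le_of_word (n : ℕ) (u : WB n) (l : List ℕ) (hl : ∀ j ∈ l, j < n)
    (hp : (l.map tB).prod = (u : Equiv.Perm ℤ)) : lenB n u ≤ l.length := by
  refine Nat.sInf_le ⟨l.attach.map (fun x => (⟨x.1, hl x.1 x.2⟩ : Fin n)), by simp, ?_⟩
  rw [word_prod_conv]
  have hcomp : ((l.attach.map (fun x => (⟨x.1, hl x.1 x.2⟩ : Fin n))).map Fin.val) = l := by
    rw [List.map_map]
    exact List.attach_map_subtype_val l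
  rw [hcomp]
  exact hp

lemma lenB_eq (n : ℕ) (u : WB n) : lenB n u = invB n (u : Equiv.Perm ℤ) := by
  obtain ⟨l, hbd, hl, hlen⟩ := exists_word n (invB n (u : Equiv.Perm ℤ)) u u.2 rfl
  refine le_antisymm (hlen ▸ lenB_le_of_word n u l hbd hl) ?_
  have hne : {m | ∃ word : List (Fin n), word.length = m ∧
      (word.map (fun i => tB i)).prod = (u : Equiv.Perm ℤ)}.Nonempty := by
    refine ⟨l.length, l.attach.map (fun x => (⟨x.1, hbd x.1 x.2⟩ : Fin n)), by simp, ?_⟩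
    rw [word_prod_conv]
    have hcomp : ((l.attach.map (fun x => (⟨x.1, hbd x.1 x.2⟩ : Fin n))).map Fin.val) = l := by
      rw [List.map_map]
      exact List.attach_map_subtype_val l
    rw [hcomp]
    exact hl
  refine le_csInf hne ?_
  rintro b ⟨word, rfl, hword⟩
  rw [word_prod_conv] at hword
  have h2 := (invB_word_le n (word.map Fin.val)
    (by intro x hx; simp only [List.mem_map] at hx; obtain ⟨a, _, rfl⟩ := hx; exact a.2)).2
  rw [hword] at h2
  simpa using h2

lemma tB_inv (j : ℕ) : (tB j)⁻¹ = tB j := by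
  rw [← mul_one (tB j)⁻¹, ← tB_sq j, ← mul_assoc, inv_mul_cancel, one_mul]

lemma prod_reverse_word (l : List ℕ) :
    ((l.reverse.map tB).prod) = ((l.map tB).prod)⁻¹ := by
  induction l with
  | nil => simp
  | cons a l ih =>
    rw [List.reverse_cons, List.map_append, List.prod_append, ih]
    simp only [List.map_cons, List.map_nil, List.prod_cons, List.prod_nil, mul_one,
      mul_inv_rev, tB_inv]

lemma lenB_inv (n : ℕ) (u : WB n) : lenB n u⁻¹ = lenB n u := by
  have key : ∀ v : WB n, lenB n v⁻¹ ≤ lenB n v := by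
    intro v
    obtain ⟨l, hbd, hl, hlen⟩ := exists_word n (invB n (v : Equiv.Perm ℤ)) v v.2 rfl
    have hrev : ((l.reverse.map tB).prod) = ((v⁻¹ : WB n) : Equiv.Perm ℤ) := by
      rw [prod_reverse_word, hl]
      rfl
    have h1 : lenB n v⁻¹ ≤ l.reverse.length :=
      lenB_le_of_word n v⁻¹ l.reverse (by intro x hx; exact hbd x (List.mem_reverse.1 hx)) hrev
    rw [List.length_reverse] at h1
    exact le_trans h1 (le_of_eq (hlen.trans (lenB_eq n v).symm))
  refine le_antisymm (key u) ?_
  have h2 := key u⁻¹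
  rwa [inv_inv] at h2
section vals
lemma vL1 (i : ℕ) (hi : 1 ≤ i) : tB i (i:ℤ) = (i:ℤ)+1 := by rw [tB_pos_apply i hi]; split_ifs <;> omega
lemma vL2 (i : ℕ) (hi : 1 ≤ i) : tB i ((i:ℤ)+1) = (i:ℤ) := by rw [tB_pos_apply i hi]; split_ifs <;> omega
lemma vL3 (i : ℕ) (hi : 1 ≤ i) : tB i (-(i:ℤ)) = -(i:ℤ)-1 := by rw [tB_pos_apply i hi]; split_ifs <;> omega
lemma vL4 (i : ℕ) (hi : 1 ≤ i) : tB i (-(i:ℤ)-1) = -(i:ℤ) := by rw [tB_pos_apply i hi]; split_ifs <;> omega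
lemma vL5 (i : ℕ) (hi : 1 ≤ i) (x : ℤ) (h1 : x ≠ (i:ℤ)) (h2 : x ≠ (i:ℤ)+1) (h3 : x ≠ -(i:ℤ)) (h4 : x ≠ -(i:ℤ)-1) :
    tB i x = x := by rw [tB_pos_apply i hi]; split_ifs <;> omega
lemma vM1 (i : ℕ) : tB (i+1) ((i:ℤ)+1) = (i:ℤ)+2 := by
  rw [tB_pos_apply (i+1) (by omega)]; push_cast; split_ifs <;> omega
lemma vM2 (i : ℕ) : tB (i+1) ((i:ℤ)+2) = (i:ℤ)+1 := by
  rw [tB_pos_apply (i+1) (by omega)]; push_cast; split_ifs <;> omega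
lemma vM3 (i : ℕ) : tB (i+1) (-(i:ℤ)-1) = -(i:ℤ)-2 := by
  rw [tB_pos_apply (i+1) (by omega)]; push_cast; split_ifs <;> omega
lemma vM4 (i : ℕ) : tB (i+1) (-(i:ℤ)-2) = -(i:ℤ)-1 := by
  rw [tB_pos_apply (i+1) (by omega)]; push_cast; split_ifs <;> omega
lemma vM5 (i : ℕ) (x : ℤ) (h1 : x ≠ (i:ℤ)+1) (h2 : x ≠ (i:ℤ)+2) (h3 : x ≠ -(i:ℤ)-1)
    (h4 : x ≠ -(i:ℤ)-2) : tB (i+1) x = x := by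
  rw [tB_pos_apply (i+1) (by omega)]; push_cast; split_ifs <;> omega
end vals

lemma tB_braid (i : ℕ) (hi : 1 ≤ i) :
    tB i * tB (i+1) * tB i = tB (i+1) * tB i * tB (i+1) := by
  have hi' : (1:ℤ) ≤ (i:ℤ) := by exact_mod_cast hi
  ext x
  simp only [Equiv.Perm.mul_apply]
  by_cases c1 : x = (i:ℤ)
  · subst c1
    rw [vL1 i hi, vM1 i, vL5 i hi ((i:ℤ)+2) (by omega) (by omega) (by omega) (by omega),
      vM5 i (i:ℤ) (by omega) (by omega) (by omega) (by omega), vL1 i hi, vM1 i]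
  by_cases c2 : x = (i:ℤ)+1
  · subst c2
    rw [vL2 i hi, vM5 i (i:ℤ) (by omega) (by omega) (by omega) (by omega), vL1 i hi,
      vM1 i, vL5 i hi ((i:ℤ)+2) (by omega) (by omega) (by omega) (by omega), vM2 i]
  by_cases c3 : x = (i:ℤ)+2
  · subst c3
    rw [vL5 i hi ((i:ℤ)+2) (by omega) (by omega) (by omega) (by omega), vM2 i, vL2 i hi,
      vM5 i (i:ℤ) (by omega) (by omega) (by omega) (by omega)]
  by_cases c4 : x = -(i:ℤ)
  · subst c4
    rw [vL3 i hi, vM3 i, vL5 i hi (-(i:ℤ)-2) (by omega) (by omega) (by omega) (by omega),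
      vM5 i (-(i:ℤ)) (by omega) (by omega) (by omega) (by omega), vL3 i hi, vM3 i]
  by_cases c5 : x = -(i:ℤ)-1
  · subst c5
    rw [vL4 i hi, vM5 i (-(i:ℤ)) (by omega) (by omega) (by omega) (by omega), vL3 i hi,
      vM3 i, vL5 i hi (-(i:ℤ)-2) (by omega) (by omega) (by omega) (by omega), vM4 i]
  by_cases c6 : x = -(i:ℤ)-2
  · subst c6
    rw [vL5 i hi (-(i:ℤ)-2) (by omega) (by omega) (by omega) (by omega), vM4 i, vL4 i hi,
      vM5 i (-(i:ℤ)) (by omega) (by omega) (by omega) (by omega)]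
  · rw [vL5 i hi x (by omega) (by omega) (by omega) (by omega),
      vM5 i x (by omega) (by omega) (by omega) (by omega),
      vL5 i hi x (by omega) (by omega) (by omega) (by omega),
      vM5 i x (by omega) (by omega) (by omega) (by omega)]

lemma assembly (n : ℕ) (o : WB n → WB n → WB n)
    (hassoc : ∀ u v w : WB n, o (o u v) w = o u (o v w))
    (hgen : ∀ s : WB n, lenB n s = 1 → o s s = s)
    (hadd : ∀ u v : WB n, lenB n u + lenB n v = lenB n (u * v) → o u v = u * v)
    (W S T : WB n)
    (hSS : S * S = 1) (hTT : T * T = 1) (hbraid : S * T * S = T * S * T)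
    (lS : lenB n S = 1) (lT : lenB n T = 1)
    (m m1 m2 m3 m4 m5 : ℕ)
    (lW : lenB n W = m) (lWinv : lenB n W⁻¹ = m)
    (lWS : lenB n (W*S) = m1) (lWST : lenB n (W*S*T) = m2) (lWSTS : lenB n (W*S*T*S) = m3)
    (lWT : lenB n (W*T) = m4) (lWTS : lenB n (W*T*S) = m5)
    (r1 : m = m1 + 1) (r2 : m1 = m2 + 1) (r3 : m2 = m3 + 1)
    (r4 : m = m4 + 1) (r5 : m4 = m5 + 1)
    (z : WB n) (hprod : o W W⁻¹ = z)
    (hmin : ∀ v : WB n, o v⁻¹ v = z → lenB n W⁻¹ ≤ lenB n v) : False := by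
  have hSinv : S⁻¹ = S := inv_eq_of_mul_eq_one_right hSS
  have hTinv : T⁻¹ = T := inv_eq_of_mul_eq_one_right hTT
  have gid1 : W*S*T*S*S = W*S*T := by rw [mul_assoc (W*S*T) S S, hSS, mul_one]
  have gid2 : W*S*T*T = W*S := by rw [mul_assoc (W*S) T T, hTT, mul_one]
  have gid3 : W*S*S = W := by rw [mul_assoc W S S, hSS, mul_one]
  have gid4 : W*S*T*S*T = W*T*S := by
    calc W*S*T*S*T = W*(S*T*S)*T := by group
    _ = W*(T*S*T)*T := by rw [hbraid]
    _ = W*T*S*(T*T) := by group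
    _ = W*T*S := by rw [hTT, mul_one]
  have gid5 : W*T*S*S = W*T := by rw [mul_assoc (W*T) S S, hSS, mul_one]
  have gidSW : S*W⁻¹ = (W*S)⁻¹ := by rw [mul_inv_rev, hSinv]
  have gidTW : T*W⁻¹ = (W*T)⁻¹ := by rw [mul_inv_rev, hTinv]
  have gidSTW : (W*T*S)⁻¹ = S*(T*W⁻¹) := by rw [mul_inv_rev, mul_inv_rev, hSinv, hTinv]
  have lSW : lenB n (S*W⁻¹) = m1 := by rw [gidSW, lenB_inv, lWS]
  have lTW : lenB n (T*W⁻¹) = m4 := by rw [gidTW, lenB_inv, lWT]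
  have lSTW : lenB n (S*(T*W⁻¹)) = m5 := by rw [← gidSTW, lenB_inv, lWTS]
  have e1 : o (W*S*T*S) S = W*S*T := by
    have h := hadd (W*S*T*S) S (by rw [lWSTS, lS, gid1, lWST]; omega)
    rwa [gid1] at h
  have e2 : o (W*S*T) T = W*S := by
    have h := hadd (W*S*T) T (by rw [lWST, lT, gid2, lWS]; omega)
    rwa [gid2] at h
  have e3 : o (W*S) S = W := by
    have h := hadd (W*S) S (by rw [lWS, lS, gid3, lW]; omega)
    rwa [gid3] at h
  have e4 : o (W*S*T*S) T = W*T*S := by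
    have h := hadd (W*S*T*S) T (by rw [lWSTS, lT, gid4, lWTS]; omega)
    rwa [gid4] at h
  have e5 : o (W*T*S) S = W*T := by
    have h := hadd (W*T*S) S (by rw [lWTS, lS, gid5, lWT]; omega)
    rwa [gid5] at h
  have collapse : ∀ G X : WB n, lenB n G = 1 → G*G = 1 →
      lenB n X = lenB n (G*X) + 1 → o G X = X := by
    intro G X hG hGG hd
    have h2 : G*(G*X) = X := by rw [← mul_assoc, hGG, one_mul]
    have h1 : o G (G*X) = X := by
      have h := hadd G (G*X) (by rw [hG, h2]; omega)
      rwa [h2] at h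
    calc o G X = o G (o G (G*X)) := by rw [h1]
    _ = o (o G G) (G*X) := (hassoc G G (G*X)).symm
    _ = o G (G*X) := by rw [hgen G hG]
    _ = X := h1
  have col1 : o S W⁻¹ = W⁻¹ := collapse S W⁻¹ lS hSS (by rw [lWinv, lSW]; omega)
  have col2 : o T W⁻¹ = W⁻¹ := collapse T W⁻¹ lT hTT (by rw [lWinv, lTW]; omega)
  have col3 : o S (T*W⁻¹) = T*W⁻¹ := collapse S (T*W⁻¹) lS hSS (by rw [lTW, lSTW]; omega)
  have gidTTW : T*(T*W⁻¹) = W⁻¹ := by rw [← mul_assoc, hTT, one_mul]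
  have e6 : o T (T*W⁻¹) = W⁻¹ := by
    have h := hadd T (T*W⁻¹) (by rw [lT, lTW, gidTTW, lWinv]; omega)
    rwa [gidTTW] at h
  have hW : o (o (o (W*S*T*S) S) T) S = W := by rw [e1, e2, e3]
  have hz1 : z = o (W*S*T*S) W⁻¹ := by
    calc z = o W W⁻¹ := hprod.symm
    _ = o (o (o (o (W*S*T*S) S) T) S) W⁻¹ := by rw [hW]
    _ = o (o (o (W*S*T*S) S) T) (o S W⁻¹) := hassoc _ _ _
    _ = o (o (o (W*S*T*S) S) T) W⁻¹ := by rw [col1]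
    _ = o (o (W*S*T*S) S) (o T W⁻¹) := hassoc _ _ _
    _ = o (o (W*S*T*S) S) W⁻¹ := by rw [col2]
    _ = o (W*S*T*S) (o S W⁻¹) := hassoc _ _ _
    _ = o (W*S*T*S) W⁻¹ := by rw [col1]
  have hC : o (T*W⁻¹)⁻¹ (T*W⁻¹) = z := by
    have hCinv : (T*W⁻¹)⁻¹ = W*T := by rw [mul_inv_rev, hTinv, inv_inv]
    calc o (T*W⁻¹)⁻¹ (T*W⁻¹) = o (W*T) (T*W⁻¹) := by rw [hCinv]
    _ = o (o (o (W*S*T*S) T) S) (T*W⁻¹) := by rw [e4, e5]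
    _ = o (o (W*S*T*S) T) (o S (T*W⁻¹)) := hassoc _ _ _
    _ = o (o (W*S*T*S) T) (T*W⁻¹) := by rw [col3]
    _ = o (W*S*T*S) (o T (T*W⁻¹)) := hassoc _ _ _
    _ = o (W*S*T*S) W⁻¹ := by rw [e6]
    _ = z := hz1.symm
  have hfin := hmin (T*W⁻¹) hC
  rw [lWinv, lTW] at hfin
  omega

/-- If `w ∈ W_n` has `w(i) > w(i+1) > w(i+2)` for some `i ∈ [n-2]` (a
consecutive 321-pattern), then `w⁻¹` is not an atom of any involution in `W_n`.  Here
`o` is the Demazure product of `W_n` (the associative product with `s ∘ s = s` for each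
length-one element `s` and `u ∘ v = u * v` whenever lengths add). -/
theorem stmt_4 (n : ℕ) (o : WB n → WB n → WB n)
    (hassoc : ∀ u v w : WB n, o (o u v) w = o u (o v w))
    (hgen : ∀ s : WB n, lenB n s = 1 → o s s = s)
    (hadd : ∀ u v : WB n, lenB n u + lenB n v = lenB n (u * v) → o u v = u * v)
    (w : WB n) (i : ℕ) (hi1 : 1 ≤ i) (hi2 : i + 2 ≤ n)
    (hd1 : (w : Equiv.Perm ℤ) ((i : ℤ) + 1) < (w : Equiv.Perm ℤ) (i : ℤ))
    (hd2 : (w : Equiv.Perm ℤ) ((i : ℤ) + 2) < (w : Equiv.Perm ℤ) ((i : ℤ) + 1)) :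
    ∀ z : WB n, z * z = 1 → w⁻¹ ∉ AtomsB n o z := by
  intro z _ hmem
  obtain ⟨hprod, hmin⟩ := hmem
  rw [inv_inv] at hprod
  have hin : i < n := by omega
  have hin1 : i + 1 < n := by omega
  have hi1' : (1:ℤ) ≤ (i:ℤ) := by exact_mod_cast hi1
  set S : WB n := ⟨tB i, tB_mem hin⟩ with hSdef
  set T : WB n := ⟨tB (i+1), tB_mem hin1⟩ with hTdef
  have hSS : S * S = 1 := Subtype.ext (tB_sq i)
  have hTT : T * T = 1 := Subtype.ext (tB_sq (i+1))
  have hbraid : S * T * S = T * S * T := Subtype.ext (tB_braid i hi1)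
  have ecast : ((i+1 : ℕ) : ℤ) = (i:ℤ)+1 := by push_cast; ring
  -- descent relations on invB
  have r1 : invB n (w : Equiv.Perm ℤ) = invB n ((w : Equiv.Perm ℤ) * tB i) + 1 :=
    (invB_step_pos n (w : Equiv.Perm ℤ) i hi1 (by omega)).1 hd1
  have r4 : invB n (w : Equiv.Perm ℤ) = invB n ((w : Equiv.Perm ℤ) * tB (i+1)) + 1 := by
    refine (invB_step_pos n (w : Equiv.Perm ℤ) (i+1) (by omega) (by omega)).1 ?_
    rw [ecast, show (i:ℤ)+1+1 = (i:ℤ)+2 from by ring]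
    exact hd2
  have r2 : invB n ((w : Equiv.Perm ℤ) * tB i)
      = invB n ((w : Equiv.Perm ℤ) * tB i * tB (i+1)) + 1 := by
    refine (invB_step_pos n _ (i+1) (by omega) (by omega)).1 ?_
    rw [ecast, show (i:ℤ)+1+1 = (i:ℤ)+2 from by ring]
    simp only [Equiv.Perm.mul_apply]
    rw [vL5 i hi1 ((i:ℤ)+2) (by omega) (by omega) (by omega) (by omega), vL2 i hi1]
    exact lt_trans hd2 hd1
  have r3 : invB n ((w : Equiv.Perm ℤ) * tB i * tB (i+1))
      = invB n ((w : Equiv.Perm ℤ) * tB i * tB (i+1) * tB i) + 1 := by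
    refine (invB_step_pos n _ i hi1 (by omega)).1 ?_
    simp only [Equiv.Perm.mul_apply]
    rw [vM1 i, vM5 i (i:ℤ) (by omega) (by omega) (by omega) (by omega),
      vL5 i hi1 ((i:ℤ)+2) (by omega) (by omega) (by omega) (by omega), vL1 i hi1]
    exact hd2
  have r5 : invB n ((w : Equiv.Perm ℤ) * tB (i+1))
      = invB n ((w : Equiv.Perm ℤ) * tB (i+1) * tB i) + 1 := by
    refine (invB_step_pos n _ i hi1 (by omega)).1 ?_
    simp only [Equiv.Perm.mul_apply]
    rw [vM1 i, vM5 i (i:ℤ) (by omega) (by omega) (by omega) (by omega)]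
    exact lt_trans hd2 hd1
  -- generator lengths
  have lS : lenB n S = 1 := by
    rw [lenB_eq]
    have h := (invB_step_pos n 1 i hi1 (by omega)).2
      (by simp only [Equiv.Perm.one_apply]; omega)
    rw [one_mul, invB_one] at h
    exact h
  have lT : lenB n T = 1 := by
    rw [lenB_eq]
    have h := (invB_step_pos n 1 (i+1) (by omega) (by omega)).2
      (by simp only [Equiv.Perm.one_apply]; omega)
    rw [one_mul, invB_one] at h
    exact h
  -- lengths of the products
  have lW : lenB n w = invB n (w : Equiv.Perm ℤ) := lenB_eq n w
  have lWinv : lenB n w⁻¹ = invB n (w : Equiv.Perm ℤ) := by rw [lenB_inv]; exact lW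
  have lWS : lenB n (w*S) = invB n ((w : Equiv.Perm ℤ) * tB i) := by rw [lenB_eq]; rfl
  have lWST : lenB n (w*S*T) = invB n ((w : Equiv.Perm ℤ) * tB i * tB (i+1)) := by
    rw [lenB_eq]; rfl
  have lWSTS : lenB n (w*S*T*S) = invB n ((w : Equiv.Perm ℤ) * tB i * tB (i+1) * tB i) := by
    rw [lenB_eq]; rfl
  have lWT : lenB n (w*T) = invB n ((w : Equiv.Perm ℤ) * tB (i+1)) := by rw [lenB_eq]; rfl
  have lWTS : lenB n (w*T*S) = invB n ((w : Equiv.Perm ℤ) * tB (i+1) * tB i) := by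
    rw [lenB_eq]; rfl
  exact assembly n o hassoc hgen hadd w S T hSS hTT hbraid lS lT
    (invB n (w : Equiv.Perm ℤ)) (invB n ((w : Equiv.Perm ℤ) * tB i))
    (invB n ((w : Equiv.Perm ℤ) * tB i * tB (i+1)))
    (invB n ((w : Equiv.Perm ℤ) * tB i * tB (i+1) * tB i))
    (invB n ((w : Equiv.Perm ℤ) * tB (i+1)))
    (invB n ((w : Equiv.Perm ℤ) * tB (i+1) * tB i))
    lW lWinv lWS lWST lWSTS lWT lWTS r1 r2 r3 r4 r5 z hprod hmin
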